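/- Let w > 0, let k ∈ ℕ with k ≥ 1, and let C be a chain all of whose weights are equal to w. If C has 2k edges (i.e. 2k+1 vertices) then its noncommutative length is λ(C) = w·sqrt(k(k+1)); if C has 2k−1 edges (i.e. 2k vertices) then λ(C) = w·k. -/

import Mathlib

open scoped ENNReal

/-- The operator norm on square matrices induced by the Euclidean (ℓ²) norm. -/
noncomputable def opNorm {ι : Type*} [Finite ι] (M : Matrix ι ι ℂ) : ℝ :=
  letI := Fintype.ofFinite ι
  letI := Classical.decEq ι
  ‖Matrix.toEuclideanCLM (𝕜 := ℂ) M‖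

/-- The commutator `[D, π(a)]` of a matrix with the diagonal matrix of `a`. -/
noncomputable def commD {ι : Type*} [Finite ι] (D : Matrix ι ι ℂ) (a : ι → ℂ) : Matrix ι ι ℂ :=
  letI := Fintype.ofFinite ι
  letI := Classical.decEq ι
  D * Matrix.diagonal a - Matrix.diagonal a * D

/-- Connes' noncommutative distance associated to the Dirac operator `D`. -/
noncomputable def ncDist {ι : Type*} [Finite ι] (D : Matrix ι ι ℂ) (i j : ι) : ℝ≥0∞ :=
  ⨆ (a : ι → ℂ) (_ : opNorm (commD D a) ≤ 1), ENNReal.ofReal ‖a i - a j‖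

/-- The weight of an edge: the inverse of `|D i j|` (infinite if `D i j = 0`). -/
noncomputable def eWeight {ι : Type*} (D : Matrix ι ι ℂ) (u v : ι) : ℝ≥0∞ :=
  (ENNReal.ofReal ‖D u v‖)⁻¹

/-- Adjacency in the graph `G_D`. -/
def Adjac {ι : Type*} (D : Matrix ι ι ℂ) (u v : ι) : Prop := u ≠ v ∧ D u v ≠ 0

/-- The length of a walk `i :: p` computed with weights `eWeight D`. -/
noncomputable def walkLength {ι : Type*} (D : Matrix ι ι ℂ) : ι → List ι → ℝ≥0∞
  | _, [] => 0
  | u, v :: rest => eWeight D u v + walkLength D v rest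

/-- `i :: p` is a walk from `i` to `j` in the graph `G_D`. -/
def IsWalk {ι : Type*} (D : Matrix ι ι ℂ) (i j : ι) (p : List ι) : Prop :=
  List.Chain (Adjac D) i p ∧ (i :: p).getLast (List.cons_ne_nil _ _) = j

/-- `i` and `j` lie in the same connected component of `G_D`. -/
def Conn {ι : Type*} (D : Matrix ι ι ℂ) (i j : ι) : Prop := ∃ p, IsWalk D i j p

/-- The geodesic (weighted shortest-path) distance on `G_D`. -/
noncomputable def gDist {ι : Type*} (D : Matrix ι ι ℂ) (i j : ι) : ℝ≥0∞ :=
  ⨅ (p : List ι) (_ : IsWalk D i j p), walkLength D i p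


/-- The Dirac operator of the chain (weighted path graph) on `n` vertices with
weights `w 0, …, w (n-2)`. -/
noncomputable def chainD (n : ℕ) (w : ℕ → ℝ) : Matrix (Fin n) (Fin n) ℂ :=
  Matrix.of fun i j =>
    if (i : ℕ) + 1 = (j : ℕ) then (((w (i : ℕ))⁻¹ : ℝ) : ℂ)
    else if (j : ℕ) + 1 = (i : ℕ) then (((w (j : ℕ))⁻¹ : ℝ) : ℂ)
    else 0


open scoped ComplexConjugate
open Complex Finset Matrix

lemma opNorm_eq {n : ℕ} (M : Matrix (Fin n) (Fin n) ℂ) :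
    opNorm M = ‖Matrix.toEuclideanCLM (𝕜 := ℂ) M‖ := by
  unfold opNorm; congr!

lemma commD_eq {n : ℕ} (D : Matrix (Fin n) (Fin n) ℂ) (a : Fin n → ℂ) :
    commD D a = D * Matrix.diagonal a - Matrix.diagonal a * D := by
  unfold commD; congr!

/-- extend a `Fin n`-vector by zero -/
def extC {n : ℕ} (x : Fin n → ℂ) : ℕ → ℂ := fun j => if h : j < n then x ⟨j, h⟩ else 0

lemma extC_lt {n : ℕ} (x : Fin n → ℂ) {j : ℕ} (h : j < n) : extC x j = x ⟨j, h⟩ := dif_pos h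

lemma extC_ge {n : ℕ} (x : Fin n → ℂ) {j : ℕ} (h : n ≤ j) : extC x j = 0 := dif_neg (by omega)

lemma sum_ite_nat {n : ℕ} (m : ℕ) (G : Fin n → ℂ) :
    ∑ j : Fin n, (if m = (j : ℕ) then G j else 0) = if h : m < n then G ⟨m, h⟩ else 0 := by
  split
  · next h =>
    rw [Finset.sum_eq_single ⟨m, h⟩]
    · simp
    · intro j _ hj
      rw [if_neg]
      intro hc; exact hj (Fin.ext (by simpa using hc.symm))
    · simp
  · next h =>
    apply Finset.sum_eq_zero
    intro j _
    rw [if_neg]; omega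

lemma row_formula {n : ℕ} (w : ℝ) (a x : Fin n → ℂ) (i : Fin n) :
    (commD (chainD n fun _ => w) a *ᵥ x) i =
      ((w⁻¹ : ℝ) : ℂ) * ((extC a ((i : ℕ) + 1) - extC a i) * extC x ((i : ℕ) + 1)
        + (extC a ((i : ℕ) - 1) - extC a i) * extC x ((i : ℕ) - 1)) := by
  rw [commD_eq]
  set c : ℂ := ((w⁻¹ : ℝ) : ℂ) with hc
  have hsplit : ∀ j : Fin n,
      (chainD n (fun _ => w) * Matrix.diagonal a - Matrix.diagonal a * chainD n (fun _ => w)) i j * x j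
      = (if (i : ℕ) + 1 = (j : ℕ) then c * ((a j - a i) * x j) else 0)
        + (if (j : ℕ) + 1 = (i : ℕ) then c * ((a j - a i) * x j) else 0) := by
    intro j
    simp only [Matrix.sub_apply, Matrix.mul_diagonal, Matrix.diagonal_mul, chainD, Matrix.of_apply]
    by_cases h1 : (i : ℕ) + 1 = (j : ℕ)
    · have h2 : ¬((j : ℕ) + 1 = (i : ℕ)) := by omega
      simp only [if_pos h1, if_neg h2]; ring
    · by_cases h2 : (j : ℕ) + 1 = (i : ℕ)
      · simp only [if_neg h1, if_pos h2]; ring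
      · simp only [if_neg h1, if_neg h2]; ring
  rw [Matrix.mulVec, dotProduct]
  simp only [hsplit]
  rw [Finset.sum_add_distrib, sum_ite_nat]
  have h2 : ∑ j : Fin n, (if (j : ℕ) + 1 = (i : ℕ) then c * ((a j - a i) * x j) else 0)
      = (if h : (i:ℕ) - 1 < n then c * ((a ⟨(i:ℕ)-1, h⟩ - a i) * x ⟨(i:ℕ)-1, h⟩) else 0) := by
    by_cases hi : (i : ℕ) = 0
    · rw [dif_pos (by omega)]
      have : ∀ j : Fin n, (if (j : ℕ) + 1 = (i : ℕ) then c * ((a j - a i) * x j) else 0) = 0 := by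
        intro j; rw [if_neg (by omega)]
      simp only [this, Finset.sum_const_zero]
      have hieq : (⟨(i:ℕ) - 1, by omega⟩ : Fin n) = i := Fin.ext (by simp; omega)
      rw [hieq]; ring
    · rw [← sum_ite_nat ((i:ℕ) - 1) (fun j => c * ((a j - a i) * x j))]
      apply Finset.sum_congr rfl
      intro j _
      congr 1
      simp only [eq_iff_iff]
      omega
  rw [h2]
  -- now turn the dites into extC
  by_cases hA : (i : ℕ) + 1 < n
  · rw [dif_pos hA, extC_lt a hA, extC_lt x hA, extC_lt a i.isLt,
      dif_pos (show (i:ℕ) - 1 < n by omega), extC_lt a (show (i:ℕ) - 1 < n by omega),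
      extC_lt x (show (i:ℕ) - 1 < n by omega)]
    ring
  · rw [dif_neg hA, extC_ge a (by omega), extC_ge x (by omega), extC_lt a i.isLt,
      dif_pos (show (i:ℕ) - 1 < n by omega), extC_lt a (show (i:ℕ) - 1 < n by omega),
      extC_lt x (show (i:ℕ) - 1 < n by omega)]
    ring

lemma euclid_norm_eq {n : ℕ} (x : Fin n → ℂ) :
    ‖(WithLp.equiv 2 (Fin n → ℂ)).symm x‖ = Real.sqrt (∑ i, Complex.normSq (x i)) := by
  rw [EuclideanSpace.norm_eq]
  congr 1
  apply Finset.sum_congr rfl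
  intro i _
  rw [WithLp.equiv_symm_apply]; exact Complex.sq_norm _

lemma clm_apply {n : ℕ} (M : Matrix (Fin n) (Fin n) ℂ) (x : Fin n → ℂ) :
    Matrix.toEuclideanCLM (𝕜 := ℂ) M ((WithLp.equiv 2 (Fin n → ℂ)).symm x)
      = (WithLp.equiv 2 (Fin n → ℂ)).symm (M *ᵥ x) := by
  exact Matrix.toEuclideanCLM_toLp M x

lemma opNorm_le_one_of {n : ℕ} (M : Matrix (Fin n) (Fin n) ℂ)
    (h : ∀ x : Fin n → ℂ, ∑ i, Complex.normSq ((M *ᵥ x) i) ≤ ∑ i, Complex.normSq (x i)) :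
    opNorm M ≤ 1 := by
  rw [opNorm_eq]
  apply ContinuousLinearMap.opNorm_le_bound _ zero_le_one
  intro X
  rw [one_mul]
  have hX : X = (WithLp.equiv 2 (Fin n → ℂ)).symm (WithLp.equiv 2 (Fin n → ℂ) X) := rfl
  rw [hX, clm_apply, euclid_norm_eq, euclid_norm_eq]
  exact Real.sqrt_le_sqrt (h _)

lemma inner_bound {n : ℕ} (M : Matrix (Fin n) (Fin n) ℂ) (x y : Fin n → ℂ) :
    ‖∑ i : Fin n, conj (y i) * (M *ᵥ x) i‖ ≤
      opNorm M * (Real.sqrt (∑ i, Complex.normSq (y i)) * Real.sqrt (∑ i, Complex.normSq (x i))) := by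
  have h1 : (∑ i : Fin n, conj (y i) * (M *ᵥ x) i)
      = inner (𝕜 := ℂ) ((WithLp.equiv 2 (Fin n → ℂ)).symm y)
          (Matrix.toEuclideanCLM (𝕜 := ℂ) M ((WithLp.equiv 2 (Fin n → ℂ)).symm x)) := by
    rw [clm_apply, PiLp.inner_apply]
    apply Finset.sum_congr rfl
    intro i _
    rw [mul_comm]; rfl
  rw [h1]
  calc ‖inner (𝕜 := ℂ) ((WithLp.equiv 2 (Fin n → ℂ)).symm y)
          (Matrix.toEuclideanCLM (𝕜 := ℂ) M ((WithLp.equiv 2 (Fin n → ℂ)).symm x))‖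
      ≤ ‖(WithLp.equiv 2 (Fin n → ℂ)).symm y‖ *
          ‖Matrix.toEuclideanCLM (𝕜 := ℂ) M ((WithLp.equiv 2 (Fin n → ℂ)).symm x)‖ :=
        norm_inner_le_norm _ _
    _ ≤ ‖(WithLp.equiv 2 (Fin n → ℂ)).symm y‖ *
          (‖Matrix.toEuclideanCLM (𝕜 := ℂ) M‖ * ‖(WithLp.equiv 2 (Fin n → ℂ)).symm x‖) := by
        apply mul_le_mul_of_nonneg_left (ContinuousLinearMap.le_opNorm _ _) (norm_nonneg _)
    _ = opNorm M * (Real.sqrt (∑ i, Complex.normSq (y i)) * Real.sqrt (∑ i, Complex.normSq (x i))) := by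
        rw [opNorm_eq, euclid_norm_eq, euclid_norm_eq]; ring

/-- optimal difference sequence (unnormalized), for the even-edge chain -/
noncomputable def ee (k : ℕ) : ℕ → ℝ := fun i =>
  if Even i then (k : ℝ) - ((i / 2 : ℕ) : ℝ) else ((i / 2 : ℕ) : ℝ) + 1

lemma ee_even (k m : ℕ) : ee k (2 * m) = (k : ℝ) - m := by
  have h2 : (2 * m) / 2 = m := by omega
  simp [ee, h2, even_two_mul]

lemma ee_odd (k m : ℕ) : ee k (2 * m + 1) = (m : ℝ) + 1 := by
  have h2 : (2 * m + 1) / 2 = m := by omega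
  have : ¬ Even (2 * m + 1) := by
    simp [Nat.even_add_one, even_two_mul]
  simp [ee, h2, this]

lemma ee_id (k i : ℕ) :
    ee k (i + 2) * (ee k (i + 2) + ee k (i + 3)) + ee k (i + 1) * (ee k i + ee k (i + 1))
      = (k : ℝ) * ((k : ℝ) + 1) := by
  rcases Nat.even_or_odd i with ⟨m, rfl⟩ | ⟨m, rfl⟩
  · rw [show m + m = 2 * m by ring]
    rw [show 2*m+2 = 2*(m+1) by ring, show 2*m+3 = 2*(m+1)+1 by ring,
      ee_even, ee_odd, ee_even, ee_odd]
    push_cast; ring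
  · rw [show 2*m+1+2 = 2*(m+1)+1 by ring, show 2*m+1+3 = 2*(m+2) by ring,
      show 2*m+1+1 = 2*(m+1) by ring, ee_odd, ee_even, ee_odd, ee_even]
    push_cast; ring

lemma ee_nonneg (k i : ℕ) (h : i ≤ 2 * k) : 0 ≤ ee k i := by
  rcases Nat.even_or_odd i with ⟨m, rfl⟩ | ⟨m, rfl⟩
  · rw [show m + m = 2 * m by ring, ee_even]
    have : m ≤ k := by omega
    have : (m : ℝ) ≤ k := by exact_mod_cast this
    linarith
  · rw [ee_odd]; positivity

lemma ee_top (k : ℕ) : ee k (2 * k) = 0 := by rw [ee_even]; ring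

lemma re_symm (u v : ℂ) : (u * conj v).re = (v * conj u).re := by
  simp [Complex.mul_re, Complex.conj_re, Complex.conj_im]; ring

lemma cross_re (r r' : ℝ) (u v : ℂ) :
    ((r : ℂ) * u * conj ((r' : ℂ) * v)).re = r * r' * (u * conj v).re := by
  rw [_root_.map_mul, Complex.conj_ofReal,
    show (r : ℂ) * u * ((r' : ℂ) * conj v) = ((r * r' : ℝ) : ℂ) * (u * conj v) by push_cast; ring,
    Complex.re_ofReal_mul]

lemma normSq_real_mul (r : ℝ) (u : ℂ) : normSq ((r : ℂ) * u) = r ^ 2 * normSq u := by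
  rw [normSq_mul, normSq_ofReal]; ring

lemma even_sos (k : ℕ) (hk : 1 ≤ k) (x : ℕ → ℂ) :
    normSq ((ee k 0 : ℂ) * x 1)
      + ∑ i ∈ range (2 * k), normSq ((ee k (i + 1) : ℂ) * x (i + 2) - (ee k i : ℂ) * x i)
      ≤ (k : ℝ) * ((k : ℝ) + 1) * ∑ i ∈ range (2 * k + 1), normSq (x i) := by
  obtain ⟨k', rfl⟩ : ∃ k', k = k' + 1 := ⟨k - 1, by omega⟩
  set k := k' + 1
  set K : ℝ := (k : ℝ) * ((k : ℝ) + 1) with hK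
  set N : ℕ → ℝ := fun i => normSq (x i) with hN
  set R : ℕ → ℝ := fun i => (x (i + 2) * conj (x i)).re with hR
  set F : ℕ → ℝ := fun i => (ee k i * (ee k i + ee k (i + 1))) * N i with hF
  set G : ℕ → ℝ := fun i => (ee k (i + 1) * (ee k i + ee k (i + 1))) * N (i + 2) with hG
  have expand : ∀ i, normSq ((ee k (i + 1) : ℂ) * x (i + 2) - (ee k i : ℂ) * x i)
      = ee k (i + 1) ^ 2 * N (i + 2) + ee k i ^ 2 * N i - 2 * (ee k (i + 1) * ee k i) * R i := by
    intro i
    rw [Complex.normSq_sub, normSq_real_mul, normSq_real_mul, cross_re, hN, hR]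
    try ring
  have expandC : ∀ i, (ee k i * ee k (i + 1)) * normSq (x i + x (i + 2))
      = (ee k i * ee k (i + 1)) * (N i + N (i + 2) + 2 * R i) := by
    intro i
    rw [Complex.normSq_add, hN, hR, re_symm]
    try ring
  have cert_nonneg : 0 ≤ ∑ i ∈ range (2 * k), (ee k i * ee k (i + 1)) * normSq (x i + x (i + 2)) := by
    apply Finset.sum_nonneg
    intro i hi
    simp only [Finset.mem_range] at hi
    have h1 : 0 ≤ ee k i := ee_nonneg k i (by omega)
    have h2 : 0 ≤ ee k (i + 1) := ee_nonneg k (i + 1) (by omega)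
    exact mul_nonneg (mul_nonneg h1 h2) (Complex.normSq_nonneg _)
  -- the exact identity
  have key : normSq ((ee k 0 : ℂ) * x 1)
      + ∑ i ∈ range (2 * k), normSq ((ee k (i + 1) : ℂ) * x (i + 2) - (ee k i : ℂ) * x i)
      + ∑ i ∈ range (2 * k), (ee k i * ee k (i + 1)) * normSq (x i + x (i + 2))
      = K * ∑ i ∈ range (2 * k + 1), N i := by
    have merge : ∑ i ∈ range (2 * k), normSq ((ee k (i + 1) : ℂ) * x (i + 2) - (ee k i : ℂ) * x i)
        + ∑ i ∈ range (2 * k), (ee k i * ee k (i + 1)) * normSq (x i + x (i + 2))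
        = ∑ i ∈ range (2 * k), (F i + G i) := by
      rw [← Finset.sum_add_distrib]
      apply Finset.sum_congr rfl
      intro i _
      rw [expand, expandC, hF, hG]
      ring
    rw [add_assoc, merge]
    have splitFG : ∑ i ∈ range (2 * k), (F i + G i)
        = ∑ i ∈ range (2 * k), F i + ∑ i ∈ range (2 * k), G i := Finset.sum_add_distrib
    rw [splitFG]
    -- extend F-sum to 2k+1 terms
    have hF2k : F (2 * k) = 0 := by rw [hF]; simp [ee_top]
    have extF : ∑ i ∈ range (2 * k), F i = ∑ i ∈ range (2 * k + 1), F i := by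
      rw [Finset.sum_range_succ, hF2k, add_zero]
    rw [extF]
    -- peel
    have e1 : ∑ i ∈ range (2 * k + 1), F i
        = ∑ i ∈ range (2 * k' + 1), F (i + 2) + F 1 + F 0 := by
      rw [Finset.sum_range_succ' F (2 * k), show 2 * k = (2 * k' + 1) + 1 by omega,
        Finset.sum_range_succ' (fun i => F (i + 1)) (2 * k' + 1)]
    have e2 : ∑ i ∈ range (2 * k), G i = ∑ i ∈ range (2 * k' + 1), G i + G (2 * k' + 1) := by
      rw [show 2 * k = (2 * k' + 1) + 1 by omega, Finset.sum_range_succ]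
    have hGlast : G (2 * k' + 1) = 0 := by
      rw [hG]
      have : ee k (2 * k' + 1 + 1) = 0 := by
        rw [show 2 * k' + 1 + 1 = 2 * k by omega, ee_top]
      simp [this]
    have e3 : K * ∑ i ∈ range (2 * k + 1), N i
        = ∑ i ∈ range (2 * k' + 1), K * N (i + 2) + K * N 1 + K * N 0 := by
      rw [Finset.mul_sum, Finset.sum_range_succ' (fun i => K * N i) (2 * k),
        show 2 * k = (2 * k' + 1) + 1 by omega,
        Finset.sum_range_succ' (fun i => K * N (i + 1)) (2 * k' + 1)]
    rw [e1, e2, hGlast, add_zero, e3]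
    have main : ∑ i ∈ range (2 * k' + 1), F (i + 2) + ∑ i ∈ range (2 * k' + 1), G i
        = ∑ i ∈ range (2 * k' + 1), K * N (i + 2) := by
      rw [← Finset.sum_add_distrib]
      apply Finset.sum_congr rfl
      intro i _
      simp only [hF, hG, hK]
      rw [← ee_id k i]
      ring
    have bdry : F 1 + F 0 + normSq ((ee k 0 : ℂ) * x 1) = K * N 1 + K * N 0 := by
      simp only [hF, hN, hK]
      rw [normSq_real_mul]
      have h0 : ee k 0 = (k : ℝ) := by simpa using ee_even k 0
      have h1 : ee k 1 = 1 := by simpa using ee_odd k 0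
      have h2 : ee k 2 = (k : ℝ) - 1 := by simpa using ee_even k 1
      simp only [h0, h1, h2]
      ring
    linarith [main, bdry]
  linarith [key, cert_nonneg]

noncomputable def sE (k : ℕ) : ℕ → ℝ := fun j =>
  if Even j then ((j / 2 : ℕ) : ℝ) * ((k : ℝ) + 1) else (k : ℝ) * (((j / 2 : ℕ) : ℝ) + 1)

lemma sE_even (k m : ℕ) : sE k (2 * m) = (m : ℝ) * ((k : ℝ) + 1) := by
  have h2 : (2 * m) / 2 = m := by omega
  simp [sE, h2, even_two_mul]

lemma sE_odd (k m : ℕ) : sE k (2 * m + 1) = (k : ℝ) * ((m : ℝ) + 1) := by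
  have h2 : (2 * m + 1) / 2 = m := by omega
  have : ¬ Even (2 * m + 1) := by simp [Nat.even_add_one, even_two_mul]
  simp [sE, h2, this]

lemma sE_diff (k i : ℕ) : sE k (i + 1) - sE k i = ee k i := by
  rcases Nat.even_or_odd i with ⟨m, rfl⟩ | ⟨m, rfl⟩
  · rw [show m + m = 2 * m by ring, ee_even, sE_even, sE_odd]
    ring
  · rw [show 2*m+1+1 = 2*(m+1) by ring, ee_odd, sE_odd, sE_even]
    push_cast; ring


lemma sum_normSq_ext {n : ℕ} (x : Fin n → ℂ) :
    ∑ i : Fin n, normSq (x i) = ∑ i ∈ range n, normSq (extC x i) := by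
  rw [← Fin.sum_univ_eq_sum_range (fun j => normSq (extC x j)) n]
  apply Finset.sum_congr rfl
  intro i _
  rw [extC_lt x i.isLt]

lemma even_lower_norm (k : ℕ) (hk : 1 ≤ k) (w : ℝ) (hw : 0 < w) :
    opNorm (commD (chainD (2 * k + 1) fun _ => w)
      (fun j : Fin (2 * k + 1) =>
        ((w * (Real.sqrt ((k : ℝ) * ((k : ℝ) + 1)))⁻¹ * sE k (j : ℕ) : ℝ) : ℂ))) ≤ 1 := by
  set n := 2 * k + 1 with hn
  set K : ℝ := (k : ℝ) * ((k : ℝ) + 1) with hKdef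
  have hkR : (1 : ℝ) ≤ (k : ℝ) := by exact_mod_cast hk
  have hKpos : 0 < K := by rw [hKdef]; nlinarith
  set q : ℝ := (Real.sqrt K)⁻¹ with hq
  have hqpos : 0 < q := by
    rw [hq]; exact inv_pos.mpr (Real.sqrt_pos.mpr hKpos)
  have hq2 : q ^ 2 = K⁻¹ := by
    rw [hq, ← Real.sqrt_inv, Real.sq_sqrt (by positivity)]
  set a : Fin n → ℂ := fun j => ((w * q * sE k (j : ℕ) : ℝ) : ℂ) with ha
  have hwC : (w : ℂ) ≠ 0 := by exact_mod_cast hw.ne'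
  apply opNorm_le_one_of
  intro x
  set row : ℕ → ℂ := fun i => ((w⁻¹ : ℝ) : ℂ) *
    ((extC a (i + 1) - extC a i) * extC x (i + 1)
      + (extC a (i - 1) - extC a i) * extC x (i - 1)) with hrowdef
  have hsum1 : ∑ i : Fin n, normSq ((commD (chainD n fun _ => w) a *ᵥ x) i)
      = ∑ i ∈ range n, normSq (row i) := by
    rw [← Fin.sum_univ_eq_sum_range (fun j => normSq (row j)) n]
    apply Finset.sum_congr rfl
    intro i _
    rw [row_formula]
  have hdiff : ∀ i, i + 1 < n → extC a (i + 1) - extC a i = ((w * q * ee k i : ℝ) : ℂ) := by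
    intro i h
    rw [extC_lt a h, extC_lt a (by omega : i < n)]
    simp only [ha]
    rw [← Complex.ofReal_sub]
    congr 1
    rw [← sE_diff k i]
    ring
  have hrow0 : row 0 = (q : ℂ) * ((ee k 0 : ℂ) * extC x 1) := by
    simp only [hrowdef]
    rw [show (0 : ℕ) - 1 = 0 from rfl, sub_self, zero_mul, add_zero,
      hdiff 0 (by omega)]
    push_cast
    field_simp
  have hrowS : ∀ i, i < 2 * k →
      row (i + 1) = (q : ℂ) * ((ee k (i + 1) : ℂ) * extC x (i + 2) - (ee k i : ℂ) * extC x i) := by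
    intro i hi
    simp only [hrowdef, Nat.add_sub_cancel]
    have hneg : extC a i - extC a (i + 1) = -((w * q * ee k i : ℝ) : ℂ) := by
      rw [← hdiff i (by omega)]; ring
    by_cases h2 : i + 2 < n
    · rw [show i + 1 + 1 = i + 2 from rfl, hdiff (i + 1) (by omega), hneg]
      push_cast
      field_simp
      ring
    · have hxn : extC x (i + 2) = 0 := extC_ge x (by omega)
      have han : extC a (i + 2) = 0 := extC_ge a (by omega)
      rw [show i + 1 + 1 = i + 2 from rfl, hxn, hneg]
      push_cast
      field_simp
      ring
  have hsum2 : ∑ i ∈ range n, normSq (row i)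
      = K⁻¹ * (normSq ((ee k 0 : ℂ) * extC x 1)
          + ∑ i ∈ range (2 * k), normSq ((ee k (i + 1) : ℂ) * extC x (i + 2)
              - (ee k i : ℂ) * extC x i)) := by
    have hnn : ∑ i ∈ range n, normSq (row i) = ∑ i ∈ range (2 * k + 1), normSq (row i) := rfl
    rw [hnn, Finset.sum_range_succ' (fun i => normSq (row i)) (2 * k)]
    rw [hrow0, normSq_real_mul, hq2]
    have : ∀ i ∈ range (2 * k), normSq (row (i + 1))
        = K⁻¹ * normSq ((ee k (i + 1) : ℂ) * extC x (i + 2) - (ee k i : ℂ) * extC x i) := by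
      intro i hi
      simp only [Finset.mem_range] at hi
      rw [hrowS i hi, normSq_real_mul, hq2]
    rw [Finset.sum_congr rfl this, ← Finset.mul_sum]
    ring
  rw [hsum1, hsum2, sum_normSq_ext x]
  have hsos := even_sos k hk (extC x)
  calc K⁻¹ * (normSq ((ee k 0 : ℂ) * extC x 1)
        + ∑ i ∈ range (2 * k), normSq ((ee k (i + 1) : ℂ) * extC x (i + 2)
            - (ee k i : ℂ) * extC x i))
      ≤ K⁻¹ * (K * ∑ i ∈ range (2 * k + 1), normSq (extC x i)) := by
        apply mul_le_mul_of_nonneg_left _ (by positivity)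
        exact hsos
    _ = ∑ i ∈ range n, normSq (extC x i) := by
        rw [← mul_assoc, inv_mul_cancel₀ hKpos.ne', one_mul]

lemma sum_range_two_mul {M : Type*} [AddCommMonoid M] (n : ℕ) (f : ℕ → M) :
    ∑ i ∈ range (2 * n), f i = ∑ m ∈ range n, (f (2 * m) + f (2 * m + 1)) := by
  induction n with
  | zero => simp
  | succ n ih =>
      rw [show 2 * (n + 1) = (2 * n + 1) + 1 by ring, Finset.sum_range_succ,
        Finset.sum_range_succ, ih, Finset.sum_range_succ]
      abel

section Upper

variable {n : ℕ}

noncomputable def xvec (n : ℕ) : Fin n → ℂ := fun j =>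
  if Even (j : ℕ) then ((-1 : ℂ)) ^ ((j : ℕ) / 2) else 0

noncomputable def yvec (n : ℕ) : Fin n → ℂ := fun j =>
  if Even (j : ℕ) then 0 else ((-1 : ℂ)) ^ ((j : ℕ) / 2 + 1)

lemma ext_xvec (j : ℕ) : extC (xvec n) j
    = if j < n ∧ Even j then ((-1 : ℂ)) ^ (j / 2) else 0 := by
  by_cases h : j < n
  · rw [extC_lt _ h]
    by_cases he : Even j <;> simp [xvec, h, he]
  · rw [extC_ge _ (le_of_not_gt h)]
    simp [h]

lemma ext_yvec (j : ℕ) : extC (yvec n) j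
    = if j < n ∧ ¬ Even j then ((-1 : ℂ)) ^ (j / 2 + 1) else 0 := by
  by_cases h : j < n
  · rw [extC_lt _ h]
    by_cases he : Even j <;> simp [yvec, h, he]
  · rw [extC_ge _ (le_of_not_gt h)]
    simp [h]

lemma normSq_xvec (j : Fin n) : normSq (xvec n j) = if Even (j : ℕ) then 1 else 0 := by
  by_cases he : Even (j : ℕ) <;> simp [xvec, he]

lemma normSq_yvec (j : Fin n) : normSq (yvec n j) = if Even (j : ℕ) then 0 else 1 := by
  by_cases he : Even (j : ℕ) <;> simp [yvec, he]

lemma sum_normSq_xvec_even (k : ℕ) :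
    ∑ i : Fin (2 * k + 1), normSq (xvec (2 * k + 1) i) = (k : ℝ) + 1 := by
  have h1 : ∀ i : Fin (2 * k + 1), normSq (xvec (2 * k + 1) i)
      = (fun j : ℕ => if Even j then (1 : ℝ) else 0) (i : ℕ) := fun i => normSq_xvec i
  rw [Finset.sum_congr rfl (fun i _ => h1 i),
    Fin.sum_univ_eq_sum_range (fun j => if Even j then (1 : ℝ) else 0) (2 * k + 1),
    Finset.sum_range_succ, sum_range_two_mul]
  have : ∀ m ∈ range k, ((if Even (2 * m) then (1:ℝ) else 0) + (if Even (2*m+1) then (1:ℝ) else 0)) = 1 := by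
    intro m _
    have h2 : ¬ Even (2 * m + 1) := by simp [Nat.even_add_one, even_two_mul]
    simp [even_two_mul, h2]
  rw [Finset.sum_congr rfl this]
  simp [even_two_mul]

lemma sum_normSq_yvec (N : ℕ) (k : ℕ) (h : N = 2 * k ∨ N = 2 * k + 1) :
    ∑ i : Fin N, normSq (yvec N i) = (k : ℝ) := by
  have h1 : ∀ i : Fin N, normSq (yvec N i)
      = (fun j : ℕ => if Even j then (0 : ℝ) else 1) (i : ℕ) := fun i => normSq_yvec i
  rw [Finset.sum_congr rfl (fun i _ => h1 i),
    Fin.sum_univ_eq_sum_range (fun j => if Even j then (0 : ℝ) else 1) N]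
  have key : ∀ m ∈ range k, ((if Even (2 * m) then (0:ℝ) else 1) + (if Even (2*m+1) then (0:ℝ) else 1)) = 1 := by
    intro m _
    have h2 : ¬ Even (2 * m + 1) := by simp [Nat.even_add_one, even_two_mul]
    simp [even_two_mul, h2]
  rcases h with rfl | rfl
  · rw [sum_range_two_mul, Finset.sum_congr rfl key]
    simp
  · rw [Finset.sum_range_succ, sum_range_two_mul, Finset.sum_congr rfl key]
    simp [even_two_mul]

lemma sum_normSq_xvec_odd (k : ℕ) :
    ∑ i : Fin (2 * k), normSq (xvec (2 * k) i) = (k : ℝ) := by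
  have h1 : ∀ i : Fin (2 * k), normSq (xvec (2 * k) i)
      = (fun j : ℕ => if Even j then (1 : ℝ) else 0) (i : ℕ) := fun i => normSq_xvec i
  rw [Finset.sum_congr rfl (fun i _ => h1 i),
    Fin.sum_univ_eq_sum_range (fun j => if Even j then (1 : ℝ) else 0) (2 * k),
    sum_range_two_mul]
  have : ∀ m ∈ range k, ((if Even (2 * m) then (1:ℝ) else 0) + (if Even (2*m+1) then (1:ℝ) else 0)) = 1 := by
    intro m _
    have h2 : ¬ Even (2 * m + 1) := by simp [Nat.even_add_one, even_two_mul]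
    simp [even_two_mul, h2]
  rw [Finset.sum_congr rfl this]
  simp

end Upper

lemma conj_neg_one_pow (m : ℕ) : conj (((-1 : ℂ)) ^ m) = ((-1 : ℂ)) ^ m := by
  rw [map_pow]
  simp

lemma neg_one_pow_mul_self (m : ℕ) : ((-1 : ℂ)) ^ m * ((-1 : ℂ)) ^ m = 1 := by
  rw [← pow_add]
  exact Even.neg_one_pow ⟨m, by ring⟩

lemma neg_one_pow_mul_succ (m : ℕ) : ((-1 : ℂ)) ^ (m + 1) * ((-1 : ℂ)) ^ m = -1 := by
  rw [← pow_add]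
  exact Odd.neg_one_pow ⟨m, by ring⟩

/-- The main inner-product computation for the upper bound. `n` is the number of
vertices; the pairing sum telescopes. -/
lemma inner_sum_comp {n : ℕ} (w : ℝ) (hw : 0 < w) (a : Fin n → ℂ) (m : ℕ)
    (hmn : 2 * m + 1 < n) :
    (starRingEnd ℂ) (extC (yvec n) (2 * m + 1)) *
        (((w⁻¹ : ℝ) : ℂ) * ((extC a (2 * m + 1 + 1) - extC a (2 * m + 1)) * extC (xvec n) (2 * m + 1 + 1)
          + (extC a (2 * m + 1 - 1) - extC a (2 * m + 1)) * extC (xvec n) (2 * m + 1 - 1)))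
      = ((w⁻¹ : ℝ) : ℂ) * ((if 2 * m + 2 < n then extC a (2 * m + 2) - extC a (2 * m + 1) else 0)
          + (extC a (2 * m + 1) - extC a (2 * m))) := by
  have hodd : ¬ Even (2 * m + 1) := by simp [Nat.even_add_one, even_two_mul]
  have hy : extC (yvec n) (2 * m + 1) = ((-1 : ℂ)) ^ (m + 1) := by
    rw [ext_yvec, if_pos ⟨hmn, hodd⟩, show (2 * m + 1) / 2 = m by omega]
  have hx0 : extC (xvec n) (2 * m + 1 - 1) = ((-1 : ℂ)) ^ m := by
    rw [show 2 * m + 1 - 1 = 2 * m by omega, ext_xvec,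
      if_pos ⟨by omega, even_two_mul m⟩, show (2 * m) / 2 = m by omega]
  have hx2 : extC (xvec n) (2 * m + 1 + 1)
      = if 2 * m + 2 < n then ((-1 : ℂ)) ^ (m + 1) else 0 := by
    rw [show 2 * m + 1 + 1 = 2 * m + 2 by omega, ext_xvec]
    by_cases h : 2 * m + 2 < n
    · rw [if_pos ⟨h, by exact ⟨m + 1, by ring⟩⟩, if_pos h, show (2 * m + 2) / 2 = m + 1 by omega]
    · rw [if_neg (by tauto), if_neg h]
  rw [hy, hx0, hx2, conj_neg_one_pow, show 2 * m + 1 - 1 = 2 * m by omega]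
  by_cases h : 2 * m + 2 < n
  · rw [if_pos h, if_pos h]
    calc (-1:ℂ)^(m+1) * (↑w⁻¹ * ((extC a (2*m+1+1) - extC a (2*m+1)) * (-1:ℂ)^(m+1)
          + (extC a (2*m) - extC a (2*m+1)) * (-1:ℂ)^m))
      = ((-1:ℂ)^(m+1) * (-1:ℂ)^(m+1)) * (↑w⁻¹ * (extC a (2*m+1+1) - extC a (2*m+1)))
        + ((-1:ℂ)^(m+1) * (-1:ℂ)^m) * (↑w⁻¹ * (extC a (2*m) - extC a (2*m+1))) := by ring
      _ = ↑w⁻¹ * ((extC a (2*m+2) - extC a (2*m+1)) + (extC a (2*m+1) - extC a (2*m))) := by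
          rw [neg_one_pow_mul_self, neg_one_pow_mul_succ,
            show 2*m+1+1 = 2*m+2 from rfl]
          ring
  · rw [if_neg h, if_neg h]
    calc (-1:ℂ)^(m+1) * (↑w⁻¹ * ((extC a (2*m+1+1) - extC a (2*m+1)) * 0
          + (extC a (2*m) - extC a (2*m+1)) * (-1:ℂ)^m))
      = ((-1:ℂ)^(m+1) * (-1:ℂ)^m) * (↑w⁻¹ * (extC a (2*m) - extC a (2*m+1))) := by ring
      _ = ↑w⁻¹ * (0 + (extC a (2*m+1) - extC a (2*m))) := by
          rw [neg_one_pow_mul_succ]; ring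

lemma sum_conj_row {n : ℕ} (w : ℝ) (a : Fin n → ℂ) :
    ∑ i : Fin n, conj (yvec n i) * ((commD (chainD n fun _ => w) a) *ᵥ xvec n) i
      = ∑ i ∈ range n, conj (extC (yvec n) i) * (((w⁻¹ : ℝ) : ℂ) *
          ((extC a (i + 1) - extC a i) * extC (xvec n) (i + 1)
            + (extC a (i - 1) - extC a i) * extC (xvec n) (i - 1))) := by
  rw [← Fin.sum_univ_eq_sum_range (fun i => conj (extC (yvec n) i) * (((w⁻¹ : ℝ) : ℂ) *
          ((extC a (i + 1) - extC a i) * extC (xvec n) (i + 1)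
            + (extC a (i - 1) - extC a i) * extC (xvec n) (i - 1)))) n]
  apply Finset.sum_congr rfl
  intro i _
  rw [row_formula]
  congr 1
  rw [extC_lt _ i.isLt]

lemma yvec_conj_zero {n : ℕ} (m : ℕ) (hm : Even m) : conj (extC (yvec n) m) = 0 := by
  rw [ext_yvec, if_neg (by tauto)]
  exact map_zero _

lemma even_upper (k : ℕ) (hk : 1 ≤ k) (w : ℝ) (hw : 0 < w) (a : Fin (2 * k + 1) → ℂ)
    (ha : opNorm (commD (chainD (2 * k + 1) fun _ => w) a) ≤ 1) :
    ‖a ⟨2 * k, Nat.lt_succ_self _⟩ - a ⟨0, Nat.succ_pos _⟩‖ ≤ w * Real.sqrt ((k : ℝ) * ((k : ℝ) + 1)) := by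
  have hbound := inner_bound (commD (chainD (2 * k + 1) fun _ => w) a)
    (xvec (2 * k + 1)) (yvec (2 * k + 1))
  set g : ℕ → ℂ := fun m => extC a (2 * m) with hg
  have hS : ∑ i : Fin (2 * k + 1), conj (yvec (2 * k + 1) i) *
        ((commD (chainD (2 * k + 1) fun _ => w) a) *ᵥ xvec (2 * k + 1)) i
      = ((w⁻¹ : ℝ) : ℂ) * (g k - g 0) := by
    rw [sum_conj_row w a]
    rw [Finset.sum_range_succ, yvec_conj_zero (2 * k) (even_two_mul k), zero_mul, add_zero,
      sum_range_two_mul]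
    have hterm : ∀ m ∈ range k, (conj (extC (yvec (2 * k + 1)) (2 * m)) * (((w⁻¹ : ℝ) : ℂ) *
          ((extC a (2 * m + 1) - extC a (2 * m)) * extC (xvec (2 * k + 1)) (2 * m + 1)
            + (extC a (2 * m - 1) - extC a (2 * m)) * extC (xvec (2 * k + 1)) (2 * m - 1)))
        + conj (extC (yvec (2 * k + 1)) (2 * m + 1)) * (((w⁻¹ : ℝ) : ℂ) *
          ((extC a (2 * m + 1 + 1) - extC a (2 * m + 1)) * extC (xvec (2 * k + 1)) (2 * m + 1 + 1)
            + (extC a (2 * m + 1 - 1) - extC a (2 * m + 1)) * extC (xvec (2 * k + 1)) (2 * m + 1 - 1))))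
        = ((w⁻¹ : ℝ) : ℂ) * (g (m + 1) - g m) := by
      intro m hm
      simp only [Finset.mem_range] at hm
      rw [yvec_conj_zero (2 * m) (even_two_mul m), zero_mul, zero_add,
        inner_sum_comp w hw a m (by omega), if_pos (by omega : 2 * m + 2 < 2 * k + 1)]
      simp only [hg, show 2 * (m + 1) = 2 * m + 2 by ring]
      ring
    rw [Finset.sum_congr rfl hterm, ← Finset.mul_sum, Finset.sum_range_sub g k]
  rw [hS] at hbound
  rw [sum_normSq_xvec_even k, sum_normSq_yvec (2 * k + 1) k (Or.inr rfl)] at hbound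
  have hnorm : ‖((w⁻¹ : ℝ) : ℂ) * (g k - g 0)‖ = w⁻¹ * ‖g k - g 0‖ := by
    rw [norm_mul, Complex.norm_real, Real.norm_eq_abs, abs_of_pos (inv_pos.mpr hw)]
  rw [hnorm] at hbound
  have hval : g k - g 0 = a ⟨2 * k, by omega⟩ - a ⟨0, by omega⟩ := by
    simp only [hg]
    rw [extC_lt a (by omega : 2 * k < 2 * k + 1), show 2 * 0 = 0 by ring,
      extC_lt a (by omega : 0 < 2 * k + 1)]
  rw [hval] at hbound
  have hX : (0:ℝ) ≤ Real.sqrt (k : ℝ) * Real.sqrt ((k : ℝ) + 1) := by positivity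
  have h2 : opNorm (commD (chainD (2 * k + 1) fun _ => w) a) *
        (Real.sqrt (k : ℝ) * Real.sqrt ((k : ℝ) + 1))
      ≤ Real.sqrt (k : ℝ) * Real.sqrt ((k : ℝ) + 1) := mul_le_of_le_one_left hX ha
  have h3 : w⁻¹ * ‖a ⟨2 * k, by omega⟩ - a ⟨0, by omega⟩‖
      ≤ Real.sqrt (k : ℝ) * Real.sqrt ((k : ℝ) + 1) := le_trans hbound h2
  rw [Real.sqrt_mul (by positivity : (0:ℝ) ≤ (k:ℝ))]
  calc ‖a ⟨2 * k, by omega⟩ - a ⟨0, by omega⟩‖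
      = w * (w⁻¹ * ‖a ⟨2 * k, by omega⟩ - a ⟨0, by omega⟩‖) := by
        field_simp
    _ ≤ w * (Real.sqrt (k : ℝ) * Real.sqrt ((k : ℝ) + 1)) := by
        apply mul_le_mul_of_nonneg_left h3 (le_of_lt hw)

lemma sum_range_split {M : Type*} [AddCommMonoid M] (k : ℕ) (hk : 1 ≤ k) (F : ℕ → M) :
    ∑ m ∈ range k, F m = ∑ m ∈ range (k - 1), F m + F (k - 1) := by
  rw [show k = (k - 1) + 1 by omega, Finset.sum_range_succ, Nat.add_sub_cancel]

lemma odd_upper (k : ℕ) (hk : 1 ≤ k) (w : ℝ) (hw : 0 < w) (a : Fin (2 * k) → ℂ)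
    (ha : opNorm (commD (chainD (2 * k) fun _ => w) a) ≤ 1) :
    ‖a ⟨2 * k - 1, Nat.sub_lt (Nat.mul_pos Nat.two_pos hk) Nat.one_pos⟩ - a ⟨0, Nat.mul_pos Nat.two_pos hk⟩‖ ≤ w * (k : ℝ) := by
  have hbound := inner_bound (commD (chainD (2 * k) fun _ => w) a)
    (xvec (2 * k)) (yvec (2 * k))
  set g : ℕ → ℂ := fun m => extC a (2 * m) with hg
  have hS : ∑ i : Fin (2 * k), conj (yvec (2 * k) i) *
        ((commD (chainD (2 * k) fun _ => w) a) *ᵥ xvec (2 * k)) i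
      = ((w⁻¹ : ℝ) : ℂ) * (extC a (2 * k - 1) - extC a 0) := by
    rw [sum_conj_row w a, sum_range_two_mul]
    have hterm : ∀ m ∈ range k, (conj (extC (yvec (2 * k)) (2 * m)) * (((w⁻¹ : ℝ) : ℂ) *
          ((extC a (2 * m + 1) - extC a (2 * m)) * extC (xvec (2 * k)) (2 * m + 1)
            + (extC a (2 * m - 1) - extC a (2 * m)) * extC (xvec (2 * k)) (2 * m - 1)))
        + conj (extC (yvec (2 * k)) (2 * m + 1)) * (((w⁻¹ : ℝ) : ℂ) *
          ((extC a (2 * m + 1 + 1) - extC a (2 * m + 1)) * extC (xvec (2 * k)) (2 * m + 1 + 1)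
            + (extC a (2 * m + 1 - 1) - extC a (2 * m + 1)) * extC (xvec (2 * k)) (2 * m + 1 - 1))))
        = ((w⁻¹ : ℝ) : ℂ) * ((if 2 * m + 2 < 2 * k then extC a (2 * m + 2) - extC a (2 * m + 1) else 0)
            + (extC a (2 * m + 1) - extC a (2 * m))) := by
      intro m hm
      simp only [Finset.mem_range] at hm
      rw [yvec_conj_zero (2 * m) (even_two_mul m), zero_mul, zero_add,
        inner_sum_comp w hw a m (by omega)]
    rw [Finset.sum_congr rfl hterm]
    rw [sum_range_split k hk]
    have hlast : ((w⁻¹ : ℝ) : ℂ) * ((if 2 * (k - 1) + 2 < 2 * k then extC a (2 * (k - 1) + 2) - extC a (2 * (k - 1) + 1) else 0)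
            + (extC a (2 * (k - 1) + 1) - extC a (2 * (k - 1))))
        = ((w⁻¹ : ℝ) : ℂ) * (extC a (2 * (k - 1) + 1) - extC a (2 * (k - 1))) := by
      rw [if_neg (by omega)]
      ring
    have hmid : ∀ m ∈ range (k - 1), ((w⁻¹ : ℝ) : ℂ) * ((if 2 * m + 2 < 2 * k then extC a (2 * m + 2) - extC a (2 * m + 1) else 0)
            + (extC a (2 * m + 1) - extC a (2 * m)))
        = ((w⁻¹ : ℝ) : ℂ) * (g (m + 1) - g m) := by
      intro m hm
      simp only [Finset.mem_range] at hm
      rw [if_pos (by omega)]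
      simp only [hg, show 2 * (m + 1) = 2 * m + 2 by ring]
      ring
    rw [Finset.sum_congr rfl hmid, hlast, ← Finset.mul_sum, Finset.sum_range_sub g (k - 1)]
    simp only [hg]
    rw [show 2 * 0 = 0 by ring, show 2 * (k - 1) + 1 = 2 * k - 1 by omega]
    ring
  rw [hS] at hbound
  rw [sum_normSq_xvec_odd k, sum_normSq_yvec (2 * k) k (Or.inl rfl)] at hbound
  have hnorm : ‖((w⁻¹ : ℝ) : ℂ) * (extC a (2 * k - 1) - extC a 0)‖
      = w⁻¹ * ‖extC a (2 * k - 1) - extC a 0‖ := by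
    rw [norm_mul, Complex.norm_real, Real.norm_eq_abs, abs_of_pos (inv_pos.mpr hw)]
  rw [hnorm] at hbound
  have hval : extC a (2 * k - 1) - extC a 0 = a ⟨2 * k - 1, by omega⟩ - a ⟨0, by omega⟩ := by
    rw [extC_lt a (by omega : 2 * k - 1 < 2 * k), extC_lt a (by omega : 0 < 2 * k)]
  rw [hval] at hbound
  have hsq : Real.sqrt (k : ℝ) * Real.sqrt (k : ℝ) = (k : ℝ) :=
    Real.mul_self_sqrt (by positivity)
  rw [hsq] at hbound
  have h2 : opNorm (commD (chainD (2 * k) fun _ => w) a) * (k : ℝ) ≤ (k : ℝ) :=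
    mul_le_of_le_one_left (by positivity) ha
  have h3 : w⁻¹ * ‖a ⟨2 * k - 1, by omega⟩ - a ⟨0, by omega⟩‖ ≤ (k : ℝ) := le_trans hbound h2
  calc ‖a ⟨2 * k - 1, by omega⟩ - a ⟨0, by omega⟩‖
      = w * (w⁻¹ * ‖a ⟨2 * k - 1, by omega⟩ - a ⟨0, by omega⟩‖) := by field_simp
    _ ≤ w * (k : ℝ) := mul_le_mul_of_nonneg_left h3 (le_of_lt hw)

lemma odd_lower_norm (k : ℕ) (hk : 1 ≤ k) (w : ℝ) (hw : 0 < w) :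
    opNorm (commD (chainD (2 * k) fun _ => w)
      (fun j : Fin (2 * k) => ((w * ((((j : ℕ) + 1) / 2 : ℕ) : ℝ) : ℝ) : ℂ))) ≤ 1 := by
  have hwC : (w : ℂ) ≠ 0 := by exact_mod_cast hw.ne'
  set a : Fin (2 * k) → ℂ := fun j => ((w * ((((j : ℕ) + 1) / 2 : ℕ) : ℝ) : ℝ) : ℂ) with ha
  apply opNorm_le_one_of
  intro x
  set row : ℕ → ℂ := fun i => ((w⁻¹ : ℝ) : ℂ) *
    ((extC a (i + 1) - extC a i) * extC x (i + 1)
      + (extC a (i - 1) - extC a i) * extC x (i - 1)) with hrowdef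
  have hsum1 : ∑ i : Fin (2 * k), normSq ((commD (chainD (2 * k) fun _ => w) a *ᵥ x) i)
      = ∑ i ∈ range (2 * k), normSq (row i) := by
    rw [← Fin.sum_univ_eq_sum_range (fun j => normSq (row j)) (2 * k)]
    apply Finset.sum_congr rfl
    intro i _
    rw [row_formula]
  have hA : ∀ j, j < 2 * k → extC a j = ((w * (((j + 1) / 2 : ℕ) : ℝ) : ℝ) : ℂ) := by
    intro j hj
    rw [extC_lt a hj]
  have hrow_even : ∀ m, m < k → row (2 * m) = extC x (2 * m + 1) := by
    intro m hm
    have hd1 : extC a (2 * m + 1) - extC a (2 * m) = ((w : ℝ) : ℂ) := by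
      rw [hA (2 * m + 1) (by omega), hA (2 * m) (by omega),
        show (2 * m + 1 + 1) / 2 = m + 1 by omega, show (2 * m + 1) / 2 = m by omega,
        ← Complex.ofReal_sub]
      congr 1
      push_cast
      ring
    have hd2 : (extC a (2 * m - 1) - extC a (2 * m)) * extC x (2 * m - 1) = 0 := by
      rcases Nat.eq_zero_or_pos m with rfl | hm1
      · simp only [show 2 * 0 = 0 by ring, show (0 : ℕ) - 1 = 0 from rfl, sub_self, zero_mul]
      · have : extC a (2 * m - 1) = extC a (2 * m) := by
          rw [hA (2 * m - 1) (by omega), hA (2 * m) (by omega),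
            show (2 * m - 1 + 1) / 2 = m by omega, show (2 * m + 1) / 2 = m by omega]
        rw [this, sub_self, zero_mul]
    simp only [hrowdef]
    rw [hd1, hd2, add_zero]
    rw [show ((w⁻¹ : ℝ) : ℂ) = (w : ℂ)⁻¹ by push_cast; rfl]
    field_simp
  have hrow_odd : ∀ m, m < k → row (2 * m + 1) = -extC x (2 * m) := by
    intro m hm
    have hd1 : (extC a (2 * m + 1 + 1) - extC a (2 * m + 1)) * extC x (2 * m + 1 + 1) = 0 := by
      by_cases h2 : 2 * m + 2 < 2 * k
      · have : extC a (2 * m + 1 + 1) = extC a (2 * m + 1) := by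
          rw [show 2 * m + 1 + 1 = 2 * m + 2 from rfl, hA (2 * m + 2) h2, hA (2 * m + 1) (by omega),
            show (2 * m + 2 + 1) / 2 = m + 1 by omega, show (2 * m + 1 + 1) / 2 = m + 1 by omega]
        rw [this, sub_self, zero_mul]
      · rw [show 2 * m + 1 + 1 = 2 * m + 2 from rfl, extC_ge x (by omega), mul_zero]
    have hd2 : extC a (2 * m + 1 - 1) - extC a (2 * m + 1) = -((w : ℝ) : ℂ) := by
      rw [show 2 * m + 1 - 1 = 2 * m from rfl, hA (2 * m) (by omega), hA (2 * m + 1) (by omega),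
        show (2 * m + 1) / 2 = m by omega, show (2 * m + 1 + 1) / 2 = m + 1 by omega,
        ← Complex.ofReal_sub, ← Complex.ofReal_neg]
      congr 1
      push_cast
      ring
    simp only [hrowdef]
    rw [hd1, hd2, zero_add, show 2 * m + 1 - 1 = 2 * m from rfl]
    rw [show ((w⁻¹ : ℝ) : ℂ) = (w : ℂ)⁻¹ by push_cast; rfl]
    field_simp
  rw [hsum1, sum_range_two_mul]
  have hx : ∑ i : Fin (2 * k), normSq (x i) = ∑ i ∈ range (2 * k), normSq (extC x i) :=
    sum_normSq_ext x
  rw [hx, sum_range_two_mul]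
  apply le_of_eq
  apply Finset.sum_congr rfl
  intro m hm
  simp only [Finset.mem_range] at hm
  rw [hrow_even m hm, hrow_odd m hm, Complex.normSq_neg]
  ring


theorem stmt12 (w : ℝ) (hw : 0 < w) (k : ℕ) (hk : 1 ≤ k) :
    ncDist (chainD (2 * k + 1) fun _ => w) ⟨0, by omega⟩ ⟨2 * k, by omega⟩ =
      ENNReal.ofReal (w * Real.sqrt ((k : ℝ) * ((k : ℝ) + 1))) ∧
    ncDist (chainD (2 * k) fun _ => w) ⟨0, by omega⟩ ⟨2 * k - 1, by omega⟩ =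
      ENNReal.ofReal (w * (k : ℝ)) := by
  have hkR : (1 : ℝ) ≤ (k : ℝ) := by exact_mod_cast hk
  constructor
  · -- even number of edges
    set K : ℝ := (k : ℝ) * ((k : ℝ) + 1) with hKdef
    have hKpos : 0 < K := by nlinarith
    apply le_antisymm
    · apply iSup_le
      intro a
      apply iSup_le
      intro ha
      apply ENNReal.ofReal_le_ofReal
      rw [norm_sub_rev]
      exact even_upper k hk w hw a ha
    · set aopt : Fin (2 * k + 1) → ℂ := fun j =>
        ((w * (Real.sqrt K)⁻¹ * sE k (j : ℕ) : ℝ) : ℂ) with haopt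
      have hopt : opNorm (commD (chainD (2 * k + 1) fun _ => w) aopt) ≤ 1 :=
        even_lower_norm k hk w hw
      have hval : ‖aopt ⟨0, by omega⟩ - aopt ⟨2 * k, by omega⟩‖ = w * Real.sqrt K := by
        simp only [haopt]
        have h0 : sE k ((⟨0, by omega⟩ : Fin (2 * k + 1)) : ℕ) = 0 := by
          rw [show ((⟨0, by omega⟩ : Fin (2 * k + 1)) : ℕ) = 2 * 0 by norm_num, sE_even]
          norm_num
        have h1 : sE k ((⟨2 * k, by omega⟩ : Fin (2 * k + 1)) : ℕ) = K := by
          rw [show ((⟨2 * k, by omega⟩ : Fin (2 * k + 1)) : ℕ) = 2 * k from rfl, sE_even]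
        rw [h0, h1, mul_zero, ← Complex.ofReal_sub, Complex.norm_real, Real.norm_eq_abs]
        have hss : Real.sqrt K * Real.sqrt K = K := Real.mul_self_sqrt hKpos.le
        have hsne : Real.sqrt K ≠ 0 := by positivity
        rw [show (0 : ℝ) - w * (Real.sqrt K)⁻¹ * K = -(w * (Real.sqrt K)⁻¹ * K) by ring, abs_neg,
          _root_.abs_of_nonneg (by positivity : (0:ℝ) ≤ w * (Real.sqrt K)⁻¹ * K)]
        field_simp
        nlinarith [hss]
      calc ENNReal.ofReal (w * Real.sqrt K)
          = ENNReal.ofReal ‖aopt ⟨0, by omega⟩ - aopt ⟨2 * k, by omega⟩‖ := by rw [hval]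
        _ ≤ ncDist (chainD (2 * k + 1) fun _ => w) ⟨0, by omega⟩ ⟨2 * k, by omega⟩ := by
            apply le_iSup_of_le aopt
            apply le_iSup_of_le hopt
            exact le_rfl
  · apply le_antisymm
    · apply iSup_le
      intro a
      apply iSup_le
      intro ha
      apply ENNReal.ofReal_le_ofReal
      rw [norm_sub_rev]
      exact odd_upper k hk w hw a ha
    · set aopt : Fin (2 * k) → ℂ := fun j =>
        ((w * ((((j : ℕ) + 1) / 2 : ℕ) : ℝ) : ℝ) : ℂ) with haopt
      have hopt : opNorm (commD (chainD (2 * k) fun _ => w) aopt) ≤ 1 :=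
        odd_lower_norm k hk w hw
      have hval : ‖aopt ⟨0, by omega⟩ - aopt ⟨2 * k - 1, by omega⟩‖ = w * (k : ℝ) := by
        simp only [haopt]
        rw [show (((⟨0, by omega⟩ : Fin (2 * k)) : ℕ) + 1) / 2 = 0 by norm_num,
          show (((⟨2 * k - 1, by omega⟩ : Fin (2 * k)) : ℕ) + 1) / 2 = k by simp; omega]
        rw [← Complex.ofReal_sub, Complex.norm_real, Real.norm_eq_abs]
        rw [show w * ((0 : ℕ) : ℝ) - w * (k : ℝ) = -(w * (k : ℝ)) by push_cast; ring, abs_neg]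
        exact _root_.abs_of_nonneg (by positivity)
      calc ENNReal.ofReal (w * (k : ℝ))
          = ENNReal.ofReal ‖aopt ⟨0, by omega⟩ - aopt ⟨2 * k - 1, by omega⟩‖ := by rw [hval]
        _ ≤ ncDist (chainD (2 * k) fun _ => w) ⟨0, by omega⟩ ⟨2 * k - 1, by omega⟩ := by
            apply le_iSup_of_le aopt
            apply le_iSup_of_le hopt
            exact le_rfl
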